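/- arXiv:2104.14488 — 3 statements merged into one kernel-verified Lean document; each statement's English description precedes it below -/
import Mathlib

section
/- Let S be a commutative ring in which any two nonzero ideals have nonzero intersection (i.e., S is a uniform S-module), and suppose S is Noetherian. Then every element of S that is not nilpotent is a regular element (non-zero-divisor). -/
/-- In a commutative Noetherian ring in which any two nonzero ideals have nonzero
intersection, every non-nilpotent element is a non-zero-divisor. -/
theorem stmt0 (S : Type*) [CommRing S] [IsNoetherianRing S]
    (huniform : ∀ I J : Ideal S, I ≠ ⊥ → J ≠ ⊥ → I ⊓ J ≠ ⊥)
    (r : S) (hr : ¬ IsNilpotent r) :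
    r ∈ nonZeroDivisors S := by
  -- the chain of annihilators of powers of r
  set f : ℕ →o Submodule S S :=
    ⟨fun n => LinearMap.ker (LinearMap.mulLeft S (r ^ n)),
     by
      intro m n hmn x hx
      simp only [LinearMap.mem_ker, LinearMap.mulLeft_apply] at hx ⊢
      obtain ⟨k, rfl⟩ := Nat.exists_eq_add_of_le hmn
      rw [pow_add, mul_comm (r ^ m), mul_assoc, hx, mul_zero]⟩ with hf
  obtain ⟨l₀, hl₀⟩ := monotone_stabilizes_iff_noetherian.mpr (inferInstance : IsNoetherian S S) f
  set l : ℕ := l₀ + 1 with hldef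
  have hl : ∀ m, l ≤ m → f l = f m := fun m hm =>
    (hl₀ l (by omega)).symm.trans (hl₀ m (by omega))
  -- ann(r^l) ⊓ (r^l) = 0
  have hkey : f l ⊓ Ideal.span {r ^ l} = ⊥ := by
    rw [eq_bot_iff]
    rintro x ⟨hx1, hx2⟩
    simp only [hf, OrderHom.coe_mk, LinearMap.mem_ker, LinearMap.mulLeft_apply] at hx1
    rw [SetLike.mem_coe, Ideal.mem_span_singleton] at hx2
    obtain ⟨a, rfl⟩ := hx2
    have ha : a ∈ f (l + l) := by
      simp only [hf, OrderHom.coe_mk, LinearMap.mem_ker, LinearMap.mulLeft_apply]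
      show r ^ (l + l) * a = 0
      rw [pow_add, mul_assoc]
      exact hx1
    rw [← hl (l + l) (Nat.le_add_right l l)] at ha
    simp only [hf, OrderHom.coe_mk, LinearMap.mem_ker, LinearMap.mulLeft_apply] at ha
    exact ha
  have hrl : (Ideal.span {r ^ l} : Ideal S) ≠ ⊥ := by
    rw [Ne, Ideal.span_singleton_eq_bot]
    exact fun h => hr ⟨l, h⟩
  have hann : f l = ⊥ := by
    by_contra h
    exact huniform _ _ h hrl hkey
  rw [mem_nonZeroDivisors_iff_right]
  intro x hx
  have hmem : x ∈ f l := by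
    simp only [hf, OrderHom.coe_mk, LinearMap.mem_ker, LinearMap.mulLeft_apply]
    show r ^ l * x = 0
    rw [hldef, pow_succ, mul_assoc, mul_comm r x, hx, mul_zero]
  rw [hann] at hmem
  exact hmem
end

section
/- Let S and T be algebras over a field k, and suppose M is an (S,T)-bimodule that is faithful as a left S-module and finitely generated as a right T-module. Then for every finite subset 𝒮 ⊆ S there exist a finite subset 𝒯 ⊆ T and a constant K such that dim_k 𝒮⁽ⁿ⁾ ≤ K · dim_k 𝒯⁽ⁿ⁾ for all n, where 𝒳⁽ⁿ⁾ denotes the k-span of all products of at most n elements of 𝒳. -/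
open scoped ENNReal

/-- The `k`-span of all products of at most `n` elements of `X`. -/
def wordSpan (k : Type*) [Field k] (S : Type*) [Ring S] [Algebra k S]
    (X : Set S) (n : ℕ) : Submodule k S :=
  Submodule.span k {x | ∃ l : List S, l.length ≤ n ∧ (∀ a ∈ l, a ∈ X) ∧ l.prod = x}

/-- The growth function `n ↦ dim_k 𝒳⁽ⁿ⁾` of a finite subset of an algebra. -/
noncomputable def growthFn (k : Type*) [Field k] (S : Type*) [Ring S] [Algebra k S]
    (X : Finset S) (n : ℕ) : ℕ :=
  Module.finrank k (wordSpan k S (X : Set S) n)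

/-- The growth relation `S ⪯ T`. -/
def growthLE (k : Type*) [Field k] (S T : Type*) [Ring S] [Algebra k S]
    [Ring T] [Algebra k T] : Prop :=
  ∀ X : Finset S, ∃ (Y : Finset T) (K : ℕ), 0 < K ∧
    ∀ n : ℕ, growthFn k S X n ≤ K * growthFn k T Y n

/-- Growth equivalence `S ≡ T`. -/
def growthEquiv (k : Type*) [Field k] (S T : Type*) [Ring S] [Algebra k S]
    [Ring T] [Algebra k T] : Prop :=
  growthLE k S T ∧ growthLE k T S

/-- The Gelfand–Kirillov dimension of a `k`-algebra. -/
noncomputable def gkDim (k : Type*) [Field k] (S : Type*) [Ring S] [Algebra k S] : ℝ≥0∞ :=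
  ⨆ X : Finset S, Filter.limsup
    (fun n : ℕ => ENNReal.ofReal (Real.log (growthFn k S X n) / Real.log n)) Filter.atTop

section aux

open Module Submodule Set

variable {k : Type*} [Field k] {A : Type*} [Ring A] [Algebra k A]

lemma wordSet_finite (X : Finset A) (n : ℕ) :
    {x : A | ∃ l : List A, l.length ≤ n ∧ (∀ a ∈ l, a ∈ (X : Set A)) ∧ l.prod = x}.Finite := by
  have h0 : {l : List {x // x ∈ X} | l.length ≤ n}.Finite := List.finite_length_le _ n
  have h1 : {l : List A | l.length ≤ n ∧ ∀ a ∈ l, a ∈ (X : Set A)}.Finite := by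
    refine (h0.image (List.map Subtype.val)).subset ?_
    rintro l ⟨hlen, hmem⟩
    refine ⟨l.attach.map (fun a => ⟨a.1, hmem a.1 a.2⟩), by simpa using hlen, ?_⟩
    simp [List.map_map]
  refine (h1.image List.prod).subset ?_
  rintro x ⟨l, hl1, hl2, hl3⟩
  exact ⟨l, ⟨hl1, hl2⟩, hl3⟩

instance wordSpan_fd (X : Finset A) (n : ℕ) :
    FiniteDimensional k (wordSpan k A (X : Set A) n) :=
  FiniteDimensional.span_of_finite k (wordSet_finite X n)

lemma one_mem_wordSpan (X : Set A) (n : ℕ) : (1 : A) ∈ wordSpan k A X n :=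
  Submodule.subset_span ⟨[], by simp⟩

lemma wordSpan_mono (X : Set A) {m n : ℕ} (h : m ≤ n) :
    wordSpan k A X m ≤ wordSpan k A X n := by
  apply Submodule.span_mono
  rintro x ⟨l, h1, h2, h3⟩
  exact ⟨l, h1.trans h, h2, h3⟩

lemma mul_mem_wordSpan_succ {X : Set A} {y t : A} (hy : y ∈ X) {n : ℕ}
    (ht : t ∈ wordSpan k A X n) : y * t ∈ wordSpan k A X (n + 1) := by
  induction ht using Submodule.span_induction with
  | mem x hx =>
    obtain ⟨l, h1, h2, h3⟩ := hx
    refine Submodule.subset_span ⟨y :: l, by simpa using h1, ?_, by simp [h3]⟩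
    intro a ha
    rcases List.mem_cons.mp ha with h | h
    · exact h ▸ hy
    · exact h2 a h
  | zero => simp
  | add x z hx hz ihx ihz => rw [mul_add]; exact Submodule.add_mem _ ihx ihz
  | smul a x hx ih => rw [Algebra.mul_smul_comm]; exact Submodule.smul_mem _ _ ih

lemma finrank_iSup_le {K V : Type*} [Field K] [AddCommGroup V] [Module K V]
    {ι : Type*} [Fintype ι] (p : ι → Submodule K V) [∀ i, FiniteDimensional K (p i)] :
    finrank K (⨆ i, p i : Submodule K V) ≤ ∑ i, finrank K (p i) := by
  classical
  rw [← Finset.sup_univ_eq_iSup]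
  induction (Finset.univ : Finset ι) using Finset.induction with
  | empty => simp
  | insert a s hx ih =>
    rw [Finset.sup_insert, Finset.sum_insert hx]
    exact le_trans (Submodule.finrank_add_le_finrank_add_finrank _ _)
      (Nat.add_le_add_left ih _)

end aux

/-- Lemma 2.1(a): if there is an `(S,T)`-bimodule, faithful over `S` and finitely
generated over `T`, then `S ⪯ T`. -/
theorem stmt7 (k : Type*) [Field k]
    (S T : Type*) [Ring S] [Algebra k S] [Ring T] [Algebra k T]
    (M : Type*) [AddCommGroup M] [Module k M]
    [Module S M] [IsScalarTower k S M]
    [Module Tᵐᵒᵖ M] [IsScalarTower k Tᵐᵒᵖ M]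
    [SMulCommClass S Tᵐᵒᵖ M]
    (hfaith : ∀ s : S, (∀ x : M, s • x = 0) → s = 0)
    [Module.Finite Tᵐᵒᵖ M]
    (X : Finset S) :
    ∃ (Y : Finset T) (K : ℕ), 0 < K ∧
      ∀ n : ℕ, growthFn k S X n ≤ K * growthFn k T Y n := by
  classical
  obtain ⟨r, g, hg⟩ := Module.Finite.exists_fin (R := Tᵐᵒᵖ) (M := M)
  have hco : ∀ (s : X) (i : Fin r), ∃ c : Fin r → Tᵐᵒᵖ, ∑ j, c j • g j = (s : S) • g i := by
    intro s i
    have hmem : (s : S) • g i ∈ Submodule.span Tᵐᵒᵖ (Set.range g) := by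
      rw [hg]; exact Submodule.mem_top
    exact (Submodule.mem_span_range_iff_exists_fun _).mp hmem
  choose c hc using hco
  set Y : Finset T :=
    Finset.image (fun p : X × Fin r × Fin r => (c p.1 p.2.1 p.2.2).unop) Finset.univ with hY
  refine ⟨Y, r * r + 1, Nat.succ_pos _, fun n => ?_⟩
  -- the k-linear maps `t ↦ m_j • t`
  let f : Fin r → T →ₗ[k] M := fun j =>
    { toFun := fun t => MulOpposite.op t • g j
      map_add' := fun t t' => by rw [MulOpposite.op_add, add_smul]
      map_smul' := fun a t => by
        rw [MulOpposite.op_smul, smul_assoc]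
        rfl }
  -- the target submodules
  let W : ℕ → Submodule k M := fun m => ⨆ j, (wordSpan k T (Y : Set T) m).map (f j)
  have hWmono : ∀ {m m' : ℕ}, m ≤ m' → W m ≤ W m' := fun h =>
    iSup_mono fun j => Submodule.map_mono (wordSpan_mono _ h)
  have hWfd : ∀ m, FiniteDimensional k (W m) := fun m => by
    apply Submodule.finiteDimensional_iSup
  -- the ("left multiplication by s") k-linear maps on M
  let sm : S → M →ₗ[k] M := fun s =>
    { toFun := fun x => s • x
      map_add' := smul_add s
      map_smul' := fun a x => by
        rw [← algebraMap_smul S a x, ← mul_smul, ← Algebra.commutes a s, mul_smul,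
          algebraMap_smul]
        rfl }
  -- key step: multiplying by an element of X moves W m into W (m+1)
  have hstep : ∀ s (hs : s ∈ X), ∀ m : ℕ, ∀ x ∈ W m, s • x ∈ W (m + 1) := by
    intro s hs m x hx
    have hmap : (W m).map (sm s) ≤ W (m + 1) := by
      rw [Submodule.map_iSup]
      refine iSup_le fun j => ?_
      rw [← Submodule.map_comp]
      rw [wordSpan, Submodule.map_span, Submodule.span_le]
      rintro _ ⟨t, ht, rfl⟩
      have key : s • (MulOpposite.op t • g j) =
          ∑ j', (f j') ((c ⟨s, hs⟩ j j').unop * t) := by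
        rw [smul_comm, ← hc ⟨s, hs⟩ j, Finset.smul_sum]
        refine Finset.sum_congr rfl fun j' _ => ?_
        show MulOpposite.op t • (c ⟨s, hs⟩ j j' • g j')
            = MulOpposite.op ((c ⟨s, hs⟩ j j').unop * t) • g j'
        rw [smul_smul, MulOpposite.op_mul, MulOpposite.op_unop]
      show sm s (f j t) ∈ W (m + 1)
      have : sm s (f j t) = ∑ j', (f j') ((c ⟨s, hs⟩ j j').unop * t) := key
      rw [this]
      refine Submodule.sum_mem _ fun j' _ => ?_
      have hy : (c ⟨s, hs⟩ j j').unop ∈ (Y : Set T) :=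
        Finset.mem_image.mpr ⟨(⟨s, hs⟩, j, j'), Finset.mem_univ _, rfl⟩
      have htY : t ∈ wordSpan k T (Y : Set T) m := Submodule.subset_span ht
      have hmul : (c ⟨s, hs⟩ j j').unop * t ∈ wordSpan k T (Y : Set T) (m + 1) :=
        mul_mem_wordSpan_succ hy htY
      exact le_iSup (fun j'' => (wordSpan k T (Y : Set T) (m + 1)).map (f j'')) j'
        ⟨_, hmul, rfl⟩
    exact hmap ⟨x, hx, rfl⟩
  -- words in X move the generators into W
  have hword : ∀ (l : List S), (∀ a ∈ l, a ∈ X) → ∀ i, l.prod • g i ∈ W l.length := by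
    intro l
    induction l with
    | nil =>
      intro _ i
      simp only [List.prod_nil, one_smul, List.length_nil]
      have h1 : g i = f i 1 := by
        show g i = MulOpposite.op (1 : T) • g i
        rw [MulOpposite.op_one, one_smul]
      rw [h1]
      exact le_iSup (fun j => (wordSpan k T (Y : Set T) 0).map (f j)) i
        ⟨1, one_mem_wordSpan _ 0, rfl⟩
    | cons s l ih =>
      intro h i
      rw [List.prod_cons, mul_smul, List.length_cons]
      exact hstep s (h s (List.Mem.head l)) _ _ (ih (fun a ha => h a (List.Mem.tail _ ha)) i)
  -- the embedding of S into M^r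
  let Φ : S →ₗ[k] (Fin r → M) :=
    { toFun := fun s i => s • g i
      map_add' := fun s s' => by funext i; exact add_smul s s' (g i)
      map_smul' := fun a s => by funext i; simp [smul_assoc] }
  have hinj : Function.Injective Φ := by
    rw [← LinearMap.ker_eq_bot, LinearMap.ker_eq_bot']
    intro s hs
    apply hfaith
    intro x
    have hx : x ∈ Submodule.span Tᵐᵒᵖ (Set.range g) := by rw [hg]; exact Submodule.mem_top
    induction hx using Submodule.span_induction with
    | mem x hxm =>
      obtain ⟨i, rfl⟩ := hxm
      exact congrFun hs i
    | zero => simp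
    | add x y _ _ ihx ihy => rw [smul_add, ihx, ihy, add_zero]
    | smul t x _ ih => rw [smul_comm, ih, smul_zero]
  haveI := hWfd n
  -- the target submodule in the product
  let Q : Submodule k (Fin r → M) := ⨆ i, (W n).map (LinearMap.single k (fun _ => M) i)
  have hQfd : FiniteDimensional k Q := by apply Submodule.finiteDimensional_iSup
  have hmapped : (wordSpan k S (X : Set S) n).map Φ ≤ Q := by
    rw [wordSpan, Submodule.map_span, Submodule.span_le]
    rintro _ ⟨w, ⟨l, hlen, hmem, rfl⟩, rfl⟩
    have hΦ : Φ l.prod = ∑ i, Pi.single i (l.prod • g i) :=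
      (Finset.univ_sum_single _).symm
    rw [hΦ]
    refine Submodule.sum_mem _ fun i _ => ?_
    have hwi : l.prod • g i ∈ W n := hWmono hlen (hword l hmem i)
    exact le_iSup (fun i' => (W n).map (LinearMap.single k (fun _ => M) i')) i
      ⟨_, hwi, rfl⟩
  -- finrank computations
  have e1 : growthFn k S X n =
      Module.finrank k ((wordSpan k S (X : Set S) n).map Φ) :=
    (Submodule.equivMapOfInjective Φ hinj _).finrank_eq
  have e2 : Module.finrank k ((wordSpan k S (X : Set S) n).map Φ) ≤ Module.finrank k Q :=
    Submodule.finrank_mono hmapped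
  have e3 : Module.finrank k Q ≤ r * Module.finrank k (W n) := by
    refine le_trans (finrank_iSup_le _) ?_
    calc ∑ i : Fin r, Module.finrank k ((W n).map (LinearMap.single k (fun _ => M) i))
        ≤ ∑ _i : Fin r, Module.finrank k (W n) :=
          Finset.sum_le_sum fun i _ => Submodule.finrank_map_le _ _
      _ = r * Module.finrank k (W n) := by simp [Finset.sum_const, mul_comm]
  have e4 : Module.finrank k (W n) ≤ r * growthFn k T Y n := by
    refine le_trans (finrank_iSup_le _) ?_
    calc ∑ j : Fin r, Module.finrank k ((wordSpan k T (Y : Set T) n).map (f j))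
        ≤ ∑ _j : Fin r, Module.finrank k (wordSpan k T (Y : Set T) n) :=
          Finset.sum_le_sum fun j _ => Submodule.finrank_map_le _ _
      _ = r * growthFn k T Y n := by simp [Finset.sum_const, growthFn, mul_comm]
  calc growthFn k S X n ≤ Module.finrank k Q := e1 ▸ e2
    _ ≤ r * Module.finrank k (W n) := e3
    _ ≤ r * (r * growthFn k T Y n) := Nat.mul_le_mul_left _ e4
    _ = r * r * growthFn k T Y n := by ring
    _ ≤ (r * r + 1) * growthFn k T Y n := Nat.mul_le_mul_right _ (Nat.le_succ _)
end

section
/- Let S ⊆ T ⊆ U be k-algebras with S ⊆ U centralizing, and suppose T = S[𝒳] where (𝒳S)^m = 0 for some positive integer m. Then S and T are growth equivalent. -/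
open scoped ENNReal

open scoped Pointwise

section WordsSet

variable {U : Type*} [Ring U]

/-- Products of lists of length at most `n` with entries in `A`. -/
def wordsSet (A : Set U) (n : ℕ) : Set U :=
  {x | ∃ l : List U, l.length ≤ n ∧ (∀ a ∈ l, a ∈ A) ∧ l.prod = x}

theorem one_mem_wordsSet {A : Set U} {n : ℕ} : (1 : U) ∈ wordsSet A n :=
  ⟨[], by simp, by simp, rfl⟩

theorem wordsSet_mono_left {A B : Set U} (h : A ⊆ B) {n : ℕ} :
    wordsSet A n ⊆ wordsSet B n := by
  rintro x ⟨l, h1, h2, rfl⟩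
  exact ⟨l, h1, fun a ha => h (h2 a ha), rfl⟩

theorem wordsSet_mono {A : Set U} {n n' : ℕ} (h : n ≤ n') :
    wordsSet A n ⊆ wordsSet A n' := by
  rintro x ⟨l, h1, h2, rfl⟩
  exact ⟨l, h1.trans h, h2, rfl⟩

theorem mem_wordsSet_self {A : Set U} {a : U} (ha : a ∈ A) {n : ℕ} (hn : 1 ≤ n) :
    a ∈ wordsSet A n :=
  ⟨[a], by simpa, by simpa, by simp⟩

theorem mul_mem_wordsSet {A : Set U} {x y : U} {p q : ℕ}
    (hx : x ∈ wordsSet A p) (hy : y ∈ wordsSet A q) : x * y ∈ wordsSet A (p + q) := by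
  obtain ⟨l1, hl1, he1, rfl⟩ := hx
  obtain ⟨l2, hl2, he2, rfl⟩ := hy
  refine ⟨l1 ++ l2, ?_, ?_, by rw [List.prod_append]⟩
  · simpa using Nat.add_le_add hl1 hl2
  · intro a ha
    rcases List.mem_append.1 ha with h | h
    · exact he1 a h
    · exact he2 a h

theorem cons_mem_wordsSet {B : Set U} {x y : U} {n : ℕ}
    (hx : x ∈ B) (hy : y ∈ wordsSet B n) : x * y ∈ wordsSet B (n + 1) := by
  obtain ⟨l, hl, he, rfl⟩ := hy
  refine ⟨x :: l, by simpa using hl, ?_, by simp⟩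
  intro a ha
  rcases List.mem_cons.1 ha with rfl | h
  · exact hx
  · exact he a h

theorem wordsSet_zero (A : Set U) : wordsSet A 0 = {1} := by
  ext x
  constructor
  · rintro ⟨l, h1, _, rfl⟩
    simp [List.eq_nil_of_length_eq_zero (Nat.le_zero.1 h1)]
  · rintro rfl
    exact one_mem_wordsSet

theorem wordsSet_finite {A : Set U} (hA : A.Finite) (n : ℕ) : (wordsSet A n).Finite := by
  induction n with
  | zero => rw [wordsSet_zero]; exact Set.finite_singleton 1
  | succ n ih =>
    refine Set.Finite.subset (Set.Finite.insert 1 (hA.mul ih)) ?_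
    rintro x ⟨l, h1, h2, rfl⟩
    match l with
    | [] => simp
    | a :: t =>
      refine Set.mem_insert_of_mem _ ?_
      rw [List.prod_cons]
      exact Set.mul_mem_mul (h2 a (List.mem_cons_self))
        ⟨t, by simpa using h1, fun b hb => h2 b (List.mem_cons_of_mem a hb), rfl⟩

theorem wordsSet_mul_subset (A : Set U) (p q : ℕ) :
    wordsSet A p * wordsSet A q ⊆ wordsSet A (p + q) := by
  rw [Set.mul_subset_iff]
  exact fun x hx y hy => mul_mem_wordsSet hx hy

theorem wordsSet_subset_subalgebra {k : Type*} [CommSemiring k] [Algebra k U]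
    {A : Set U} {S : Subalgebra k U} (h : A ⊆ S) (n : ℕ) :
    wordsSet A n ⊆ S := by
  rintro x ⟨l, _, h2, rfl⟩
  exact list_prod_mem fun a ha => h (h2 a ha)

theorem wordsSet_subset_centralizer {A M : Set U} (h : A ⊆ Set.centralizer M) (n : ℕ) :
    wordsSet A n ⊆ Set.centralizer M := by
  rintro x ⟨l, -, h2, rfl⟩
  induction l with
  | nil => exact Set.one_mem_centralizer
  | cons a t ih =>
    rw [List.prod_cons]
    exact Set.mul_mem_centralizer (h (h2 a (List.mem_cons_self)))
      (ih fun b hb => h2 b (List.mem_cons_of_mem a hb))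

/-- chopping: a word of length `≤ M * n` is a word of length `≤ n` in words of length `≤ M`. -/
theorem wordsSet_chop {A : Set U} (M : ℕ) :
    ∀ (n : ℕ) (l : List U), l.length ≤ M * n → (∀ a ∈ l, a ∈ A) →
      l.prod ∈ wordsSet (wordsSet A M) n := by
  intro n
  induction n with
  | zero =>
    intro l h _
    simp only [Nat.mul_zero, Nat.le_zero] at h
    rw [List.eq_nil_of_length_eq_zero h]
    exact one_mem_wordsSet
  | succ n ih =>
    intro l hlen hent
    rw [← List.take_append_drop M l, List.prod_append]
    refine cons_mem_wordsSet ?_ ?_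
    · exact ⟨l.take M, by simp, fun a ha => hent a (List.mem_of_mem_take ha), rfl⟩
    · refine ih _ ?_ fun a ha => hent a (List.mem_of_mem_drop ha)
      rw [List.length_drop]
      have : M * (n + 1) = M * n + M := by ring
      omega

end WordsSet

section Transfer

variable {k : Type*} [Field k]

theorem wordsSet_image {A B : Type*} [Ring A] [Ring B] (f : A →+* B) (Z : Set A) (n : ℕ) :
    wordsSet (f '' Z) n = f '' wordsSet Z n := by
  ext x
  constructor
  · rintro ⟨l, h1, h2, rfl⟩
    have : ∀ l : List B, (∀ a ∈ l, a ∈ f '' Z) → ∃ l' : List A,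
        (∀ a ∈ l', a ∈ Z) ∧ l'.map f = l := by
      intro l
      induction l with
      | nil => exact fun _ => ⟨[], by simp, rfl⟩
      | cons a t ih =>
        intro h
        obtain ⟨l', hl', hmap⟩ := ih fun b hb => h b (List.mem_cons_of_mem a hb)
        obtain ⟨a', ha', rfl⟩ := h a (List.mem_cons_self)
        refine ⟨a' :: l', ?_, by simp [hmap]⟩
        intro b hb
        rcases List.mem_cons.1 hb with rfl | hb
        exacts [ha', hl' b hb]
    obtain ⟨l', hl', rfl⟩ := this l h2
    exact ⟨l'.prod, ⟨l', by simpa using h1, hl', rfl⟩, map_list_prod f l'⟩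
  · rintro ⟨y, ⟨l, h1, h2, rfl⟩, rfl⟩
    exact ⟨l.map f, by simpa using h1, by simpa using fun a ha => Set.mem_image_of_mem f (h2 a ha),
      (map_list_prod f l).symm⟩

theorem finrank_span_wordsSet_image {A B : Type*} [Ring A] [Ring B] [Algebra k A] [Algebra k B]
    (f : A →ₐ[k] B) (hf : Function.Injective f) (Z : Set A) (n : ℕ) :
    Module.finrank k (Submodule.span k (wordsSet (f '' Z) n)) =
      Module.finrank k (Submodule.span k (wordsSet Z n)) := by
  have h1 : wordsSet (f '' Z) n = f.toLinearMap '' wordsSet Z n := by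
    simpa using wordsSet_image f.toRingHom Z n
  rw [h1, Submodule.span_image]
  exact ((Submodule.span k (wordsSet Z n)).equivMapOfInjective f.toLinearMap hf).symm.finrank_eq

theorem growthFn_eq {A : Type*} [Ring A] [Algebra k A] {B : Type*} [Ring B] [Algebra k B]
    (f : A →ₐ[k] B) (hf : Function.Injective f) (Z : Finset A) (n : ℕ) :
    growthFn k A Z n = Module.finrank k (Submodule.span k (wordsSet (f '' (Z : Set A)) n)) :=
  (finrank_span_wordsSet_image f hf _ n).symm

end Transfer

section SpanLemmas

variable {k : Type*} [Field k] {U : Type*} [Ring U] [Algebra k U]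

theorem mul_mem_span_set_mul {A B : Set U} {x y : U}
    (hx : x ∈ Submodule.span k A) (hy : y ∈ Submodule.span k B) :
    x * y ∈ Submodule.span k (A * B) := by
  rw [← Submodule.span_mul_span]
  exact Submodule.mul_mem_mul hx hy

theorem prod_mem_span_wordsSet {A Y : Set U} {d : ℕ}
    (hY : ∀ y ∈ Y, y ∈ Submodule.span k (wordsSet A d)) :
    ∀ l : List U, (∀ a ∈ l, a ∈ Y) → l.prod ∈ Submodule.span k (wordsSet A (d * l.length)) := by
  intro l
  induction l with
  | nil => intro _; simpa using Submodule.subset_span one_mem_wordsSet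
  | cons a t ih =>
    intro h
    rw [List.prod_cons]
    have h1 : a * t.prod ∈ Submodule.span k (wordsSet A d * wordsSet A (d * t.length)) :=
      mul_mem_span_set_mul (hY a (h a (List.mem_cons_self)))
        (ih fun b hb => h b (List.mem_cons_of_mem a hb))
    refine Submodule.span_le.2 ?_ h1
    refine Set.Subset.trans (wordsSet_mul_subset A d (d * t.length)) ?_
    refine Set.Subset.trans (wordsSet_mono (by rw [List.length_cons]; ring_nf; omega)) 
      Submodule.subset_span

theorem finrank_span_setmul_le (G : Finset U) (P : Set U) (hP : P.Finite) :
    Module.finrank k (Submodule.span k ((G : Set U) * P)) ≤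
      G.card * Module.finrank k (Submodule.span k P) := by
  classical
  induction G using Finset.induction_on with
  | empty =>
    rw [Finset.coe_empty, Set.empty_mul, Submodule.span_empty, Finset.card_empty, Nat.zero_mul]
    exact Nat.le_of_eq (finrank_bot k U)
  | @insert a G ha ih =>
    have hset : ((insert a G : Finset U) : Set U) * P = ({a} : Set U) * P ∪ (G : Set U) * P := by
      rw [Finset.coe_insert, Set.insert_eq, Set.union_mul]
    rw [hset, Submodule.span_union]
    have i0 : FiniteDimensional k (Submodule.span k P) := FiniteDimensional.span_of_finite k hP
    have i1 : FiniteDimensional k (Submodule.span k (({a} : Set U) * P)) :=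
      FiniteDimensional.span_of_finite k ((Set.finite_singleton a).mul hP)
    have i2 : FiniteDimensional k (Submodule.span k ((G : Set U) * P)) :=
      FiniteDimensional.span_of_finite k (G.finite_toSet.mul hP)
    have h1 : Module.finrank k (Submodule.span k (({a} : Set U) * P)) ≤
        Module.finrank k (Submodule.span k P) := by
      have : ({a} : Set U) * P = (LinearMap.mulLeft k a) '' P := by
        rw [Set.singleton_mul]; rfl
      rw [this, Submodule.span_image]
      exact Submodule.finrank_map_le _ _
    calc Module.finrank k ↥(Submodule.span k (({a} : Set U) * P) ⊔
          Submodule.span k ((G : Set U) * P))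
        ≤ Module.finrank k (Submodule.span k (({a} : Set U) * P)) +
          Module.finrank k (Submodule.span k ((G : Set U) * P)) :=
          Submodule.finrank_add_le_finrank_add_finrank _ _
      _ ≤ Module.finrank k (Submodule.span k P) + G.card *
            Module.finrank k (Submodule.span k P) := Nat.add_le_add h1 ih
      _ = (insert a G).card * Module.finrank k (Submodule.span k P) := by
          rw [Finset.card_insert_of_notMem ha]; ring

end SpanLemmas

section Core

variable {k : Type*} [Field k] {U : Type*} [Ring U] [Algebra k U]

/-- Normal form: a word in `S' ∪ X'` is `s₀ · ∏ (xᵢ · sᵢ)`. -/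
theorem nf_lemma {S' X' : Set U} :
    ∀ l : List U, (∀ a ∈ l, a ∈ S' ∪ X') →
      ∃ s₀ ∈ wordsSet S' l.length, ∃ pairs : List (U × U),
        (∀ p ∈ pairs, p.1 ∈ X' ∧ p.2 ∈ wordsSet S' l.length) ∧
        l.prod = s₀ * (pairs.map fun p => p.1 * p.2).prod := by
  intro l
  induction l with
  | nil => exact fun _ => ⟨1, one_mem_wordsSet, [], by simp, by simp⟩
  | cons a t ih =>
    intro h
    obtain ⟨s₀, hs₀, pairs, hp, hprod⟩ := ih fun b hb => h b (List.mem_cons_of_mem a hb)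
    have hlen : t.length ≤ (a :: t).length := by simp
    rcases h a (List.mem_cons_self) with haS | haX
    · refine ⟨a * s₀, ?_, pairs, fun p hp' => ⟨(hp p hp').1, wordsSet_mono hlen (hp p hp').2⟩, ?_⟩
      · have := mul_mem_wordsSet (mem_wordsSet_self haS le_rfl) hs₀
        simpa [List.length_cons, Nat.add_comm] using this
      · rw [List.prod_cons, hprod, mul_assoc]
    · refine ⟨1, one_mem_wordsSet, (a, s₀) :: pairs, ?_, ?_⟩
      · intro p hp'
        rcases List.mem_cons.1 hp' with rfl | hp'
        · exact ⟨haX, wordsSet_mono hlen hs₀⟩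
        · exact ⟨(hp p hp').1, wordsSet_mono hlen (hp p hp').2⟩
      · rw [List.prod_cons, hprod, List.map_cons, List.prod_cons, one_mul, mul_assoc]

/-- Words with at least `m` nil-factors vanish. -/
theorem pairs_prod_zero {S : Subalgebra k U} {X : Set U} {m : ℕ}
    (hnil : ∀ l : List U, l.length = m →
      (∀ a ∈ l, ∃ x ∈ X, ∃ s ∈ S, a = x * s) → l.prod = 0)
    {X' : Set U} (hX' : X' ⊆ X) {pairs : List (U × U)} {N : ℕ}
    (hp : ∀ p ∈ pairs, p.1 ∈ X' ∧ p.2 ∈ wordsSet ((S : Set U)) N)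
    (hlen : m ≤ pairs.length) :
    (pairs.map fun p => p.1 * p.2).prod = 0 := by
  set l' := pairs.map fun p => p.1 * p.2 with hl'
  have hsplit : l' = l'.take m ++ l'.drop m := (List.take_append_drop m l').symm
  have h0 : (l'.take m).prod = 0 := by
    refine hnil _ ?_ ?_
    · rw [List.length_take, hl', List.length_map]; omega
    · intro a ha
      have ha' : a ∈ l' := List.mem_of_mem_take ha
      obtain ⟨p, hpmem, rfl⟩ := List.mem_map.1 ha'
      exact ⟨p.1, hX' (hp p hpmem).1, p.2,
        wordsSet_subset_subalgebra (le_refl (S : Set U)) N (hp p hpmem).2, rfl⟩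
  rw [hsplit, List.prod_append, h0, zero_mul]

/-- Substitution of the centralizer decomposition into an alternating product. -/
theorem subst_lemma {S : Subalgebra k U} {C₀ S₂ X' : Set U}
    (hC₀ : C₀ ⊆ Set.centralizer (S : Set U)) (hS₂ : S₂ ⊆ (S : Set U))
    (hx : ∀ x ∈ X', x ∈ Submodule.span k (wordsSet C₀ 1 * wordsSet S₂ 1)) (N : ℕ) :
    ∀ pairs : List (U × U), (∀ p ∈ pairs, p.1 ∈ X' ∧ p.2 ∈ wordsSet S₂ N) →
      (pairs.map fun p => p.1 * p.2).prod ∈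
        Submodule.span k (wordsSet C₀ pairs.length * wordsSet S₂ (pairs.length * (N + 1))) := by
  intro pairs
  induction pairs with
  | nil =>
    intro _
    have h1 : (1 : U) * 1 ∈ wordsSet C₀ 0 * wordsSet S₂ 0 :=
      Set.mul_mem_mul one_mem_wordsSet one_mem_wordsSet
    simpa using Submodule.subset_span h1
  | cons p pairs ih =>
    intro h
    rw [List.map_cons, List.prod_cons]
    have h1 : p.1 * p.2 ∈ Submodule.span k (wordsSet C₀ 1 * wordsSet S₂ (N + 1)) := by
      have := mul_mem_span_set_mul (k := k) (hx p.1 (h p (List.mem_cons_self)).1)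
        (Submodule.subset_span (Set.mem_singleton p.2))
      refine Submodule.span_le.2 ?_ this
      rw [Set.mul_subset_iff]
      rintro v ⟨c, hc, w, hw, rfl⟩ y hy
      rcases hy with rfl
      rw [mul_assoc]
      exact Submodule.subset_span
        (Set.mul_mem_mul hc (wordsSet_mono (by omega) (mul_mem_wordsSet hw (h p (List.mem_cons_self)).2)))
    have h2 := ih fun q hq => h q (List.mem_cons_of_mem p hq)
    have h3 := mul_mem_span_set_mul (k := k) h1 h2
    refine Submodule.span_le.2 ?_ h3
    rw [Set.mul_subset_iff]
    rintro v ⟨c, hc, w, hw, rfl⟩ y ⟨c', hc', w', hw', rfl⟩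
    have hcomm : w * c' = c' * w := by
      have hwS : w ∈ (S : Set U) := wordsSet_subset_subalgebra hS₂ _ hw
      have hc'C : c' ∈ Set.centralizer (S : Set U) := wordsSet_subset_centralizer hC₀ _ hc'
      exact hc'C w hwS
    have : c * w * (c' * w') = (c * c') * (w * w') := by
      rw [mul_assoc, ← mul_assoc w c' w', hcomm, mul_assoc, mul_assoc]
    rw [this]
    refine Submodule.subset_span (Set.mul_mem_mul
      (wordsSet_mono ?_ (mul_mem_wordsSet hc hc'))
      (wordsSet_mono ?_ (mul_mem_wordsSet hw hw')))
    · rw [List.length_cons]; omega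
    · rw [List.length_cons]; exact Nat.le_of_eq (by ring)

end Core

section PerWord

variable {k : Type*} [Field k] {U : Type*} [Ring U] [Algebra k U]

theorem per_word {S : Subalgebra k U} {X : Set U} {m : ℕ} (hm : 0 < m)
    (hnil : ∀ l : List U, l.length = m →
      (∀ a ∈ l, ∃ x ∈ X, ∃ s ∈ S, a = x * s) → l.prod = 0)
    {S' X' C₀ S₂ : Set U} (hS' : S' ⊆ (S : Set U)) (hX' : X' ⊆ X)
    (hC₀ : C₀ ⊆ Set.centralizer (S : Set U)) (hS₂ : S₂ ⊆ (S : Set U)) (hS'₂ : S' ⊆ S₂)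
    (hx : ∀ x ∈ X', x ∈ Submodule.span k (wordsSet C₀ 1 * wordsSet S₂ 1)) (N : ℕ) :
    wordsSet (S' ∪ X') N ⊆
      ↑(Submodule.span k (wordsSet C₀ (m - 1) * wordsSet S₂ (m * (N + 1)))) := by
  rintro w ⟨l, hlen, hent, rfl⟩
  obtain ⟨s₀, hs₀, pairs, hp, hprod⟩ := nf_lemma l hent
  rcases le_or_gt m pairs.length with hge | hlt
  · have hz : (pairs.map fun p => p.1 * p.2).prod = 0 :=
      pairs_prod_zero hnil hX'
        (fun p hp' => ⟨(hp p hp').1, wordsSet_mono_left hS' (hp p hp').2⟩) hge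
    rw [SetLike.mem_coe, hprod, hz, mul_zero]
    exact Submodule.zero_mem _
  · have hp₂ : ∀ p ∈ pairs, p.1 ∈ X' ∧ p.2 ∈ wordsSet S₂ N := fun p hp' =>
      ⟨(hp p hp').1, wordsSet_mono hlen (wordsSet_mono_left hS'₂ (hp p hp').2)⟩
    have hsub := subst_lemma hC₀ hS₂ hx N pairs hp₂
    have hs₀' : s₀ ∈ Submodule.span k ({s₀} : Set U) :=
      Submodule.subset_span (Set.mem_singleton s₀)
    have h1 := mul_mem_span_set_mul (k := k) hs₀' hsub
    rw [SetLike.mem_coe, hprod]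
    refine Submodule.span_le.2 ?_ h1
    rw [Set.mul_subset_iff]
    rintro x hx' y ⟨c, hc, w', hw', rfl⟩
    rcases hx' with rfl
    have hs₀S : x ∈ (S : Set U) := wordsSet_subset_subalgebra hS' l.length hs₀
    have hcC : c ∈ Set.centralizer (S : Set U) := wordsSet_subset_centralizer hC₀ _ hc
    have hcomm : x * (c * w') = c * (x * w') := by
      rw [← mul_assoc, hcC x hs₀S, mul_assoc]
    rw [hcomm]
    have hs₀₂ : x ∈ wordsSet S₂ N :=
      wordsSet_mono hlen (wordsSet_mono_left hS'₂ hs₀)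
    refine Submodule.subset_span (Set.mul_mem_mul (wordsSet_mono ?_ hc)
      (wordsSet_mono ?_ (mul_mem_wordsSet hs₀₂ hw')))
    · omega
    · have e1 : N + pairs.length * (N + 1) + 1 = (pairs.length + 1) * (N + 1) := by ring
      have e2 : (pairs.length + 1) * (N + 1) ≤ m * (N + 1) :=
        Nat.mul_le_mul_right _ (by omega)
      omega
  
end PerWord

section Decomp

variable {k : Type*} [Field k] {U : Type*} [Ring U] [Algebra k U]

theorem span_centralizer_mul_eq_top {S : Subalgebra k U}
    (hcent : Algebra.adjoin k (Set.centralizer (S : Set U) ∪ (S : Set U)) = ⊤) (u : U) :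
    u ∈ Submodule.span k (Set.centralizer (S : Set U) * (S : Set U)) := by
  set C := Set.centralizer (S : Set U)
  set p := Submodule.span k (C * (S : Set U)) with hp
  have h1 : (1 : U) ∈ p := by
    refine Submodule.subset_span ?_
    simpa using Set.mul_mem_mul (Set.one_mem_centralizer (S := (S : Set U))) S.one_mem
  have hmul : ∀ x y : U, x ∈ p → y ∈ p → x * y ∈ p := by
    intro x y hxp hyp
    have := mul_mem_span_set_mul (k := k) hxp hyp
    refine Submodule.span_le.2 ?_ this
    rw [Set.mul_subset_iff]
    rintro a ⟨c, hc, s, hs, rfl⟩ b ⟨c', hc', s', hs', rfl⟩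
    have hsc : s * c' = c' * s := hc' s hs
    have : c * s * (c' * s') = (c * c') * (s * s') := by
      rw [mul_assoc, ← mul_assoc s c' s', hsc, mul_assoc, mul_assoc]
    rw [this]
    exact Submodule.subset_span
      (Set.mul_mem_mul (Set.mul_mem_centralizer hc hc') (S.mul_mem hs hs'))
  have hsub : Algebra.adjoin k (C ∪ (S : Set U)) ≤ p.toSubalgebra h1 hmul := by
    refine Algebra.adjoin_le ?_
    rintro a (ha | ha)
    · have : a * 1 ∈ C * (S : Set U) := Set.mul_mem_mul ha S.one_mem
      simpa using Submodule.subset_span this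
    · have : (1 : U) * a ∈ C * (S : Set U) := Set.mul_mem_mul Set.one_mem_centralizer ha
      simpa using Submodule.subset_span this
  have : u ∈ Algebra.adjoin k (C ∪ (S : Set U)) := by rw [hcent]; trivial
  exact hsub this

theorem exists_finite_cs_decomp {S : Subalgebra k U}
    (hcent : Algebra.adjoin k (Set.centralizer (S : Set U) ∪ (S : Set U)) = ⊤) (u : U) :
    ∃ C₀ S₁ : Finset U, (C₀ : Set U) ⊆ Set.centralizer (S : Set U) ∧
      (S₁ : Set U) ⊆ (S : Set U) ∧
      u ∈ Submodule.span k ((C₀ : Set U) * (S₁ : Set U)) := by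
  classical
  have hu := span_centralizer_mul_eq_top hcent u
  rw [Submodule.mem_span_set] at hu
  obtain ⟨c, hsupp, hsum⟩ := hu
  have hch : ∀ v : U, ∃ cv sv : U,
      v ∈ Set.centralizer (S : Set U) * (S : Set U) →
        cv ∈ Set.centralizer (S : Set U) ∧ sv ∈ (S : Set U) ∧ cv * sv = v := by
    intro v
    by_cases hv : v ∈ Set.centralizer (S : Set U) * (S : Set U)
    · obtain ⟨cv, hcv, sv, hsv, he⟩ := Set.mem_mul.1 hv
      exact ⟨cv, sv, fun _ => ⟨hcv, hsv, he⟩⟩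
    · exact ⟨1, 1, fun h => absurd h hv⟩
  choose fc fs hfc using hch
  refine ⟨c.support.image fc, c.support.image (fun v => c v • fs v), ?_, ?_, ?_⟩
  · intro a ha
    obtain ⟨v, hv, rfl⟩ := Finset.mem_image.1 (by exact_mod_cast ha)
    exact (hfc v (hsupp hv)).1
  · intro a ha
    obtain ⟨v, hv, rfl⟩ := Finset.mem_image.1 (by exact_mod_cast ha)
    exact S.smul_mem (hfc v (hsupp hv)).2.1 (c v)
  · rw [← hsum]
    refine Submodule.sum_mem _ ?_
    intro v hv
    show c v • v ∈ _
    have h1 : c v • v = fc v * (c v • fs v) := by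
      nth_rewrite 2 [← (hfc v (hsupp hv)).2.2]
      rw [mul_smul_comm]
    rw [h1]
    exact Submodule.subset_span (Set.mul_mem_mul
      (Finset.mem_coe.2 (Finset.mem_image_of_mem fc hv))
      (Finset.mem_coe.2 (Finset.mem_image_of_mem _ hv)))

theorem exists_finite_word_decomp {Q : Set U} (hQ : ∀ r : k, algebraMap k U r ∈ Q)
    {y : U} (hy : y ∈ Algebra.adjoin k Q) :
    ∃ (A : Finset U) (d : ℕ), (A : Set U) ⊆ Q ∧
      y ∈ Submodule.span k (wordsSet (A : Set U) d) := by
  classical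
  have hy' : y ∈ Submodule.span k ((Submonoid.closure Q : Submonoid U) : Set U) := by
    rw [← Algebra.adjoin_eq_span]
    exact hy
  rw [Submodule.mem_span_set] at hy'
  obtain ⟨c, hsupp, hsum⟩ := hy'
  have hch : ∀ w : U, ∃ l : List U,
      w ∈ Submonoid.closure Q → (∀ a ∈ l, a ∈ Q) ∧ l.prod = w := by
    intro w
    by_cases hw : w ∈ Submonoid.closure Q
    · obtain ⟨l, hl, he⟩ := Submonoid.exists_list_of_mem_closure hw
      exact ⟨l, fun _ => ⟨hl, he⟩⟩
    · exact ⟨[], fun h => absurd h hw⟩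
  choose fl hfl using hch
  set L : U → List U := fun w => algebraMap k U (c w) :: fl w with hL
  refine ⟨c.support.biUnion (fun w => (L w).toFinset),
    c.support.sup (fun w => (L w).length), ?_, ?_⟩
  · intro a ha
    obtain ⟨w, hw, hmem⟩ := Finset.mem_biUnion.1 (by exact_mod_cast ha)
    rcases List.mem_cons.1 (List.mem_toFinset.1 hmem) with rfl | hmem'
    · exact hQ (c w)
    · exact (hfl w (hsupp hw)).1 a hmem'
  · rw [← hsum]
    refine Submodule.sum_mem _ ?_
    intro w hw
    show c w • w ∈ _
    have h1 : c w • w = (L w).prod := by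
      rw [hL]
      simp only [List.prod_cons]
      rw [(hfl w (hsupp hw)).2, Algebra.smul_def]
    rw [h1]
    refine Submodule.subset_span ⟨L w, Finset.le_sup (f := fun w => (L w).length) hw, ?_, rfl⟩
    intro a ha
    exact Finset.mem_coe.2 (Finset.mem_biUnion.2 ⟨w, hw, List.mem_toFinset.2 ha⟩)

end Decomp


/-- Lemma 2.2(b): for a subcentralizing extension `S ⊆ T = S[𝒳] ⊆ U` with `(𝒳S)^m = 0`,
`S` and `T` are growth equivalent. -/
theorem stmt13 (k : Type*) [Field k] (U : Type*) [Ring U] [Algebra k U]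
    (S T : Subalgebra k U) (hST : S ≤ T)
    (hcent : Algebra.adjoin k (Set.centralizer (S : Set U) ∪ (S : Set U)) = ⊤)
    (X : Set U) (hXT : X ⊆ (T : Set U))
    (hT : T = Algebra.adjoin k ((S : Set U) ∪ X))
    (m : ℕ) (hm : 0 < m)
    (hnil : ∀ l : List U, l.length = m →
      (∀ a ∈ l, ∃ x ∈ X, ∃ s ∈ S, a = x * s) → l.prod = 0) :
    growthEquiv k S T := by
  classical
  constructor
  · -- S ⪯ T : easy direction
    intro Xf
    refine ⟨Xf.image (Subalgebra.inclusion hST), 1, Nat.one_pos, fun n => ?_⟩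
    rw [Nat.one_mul, growthFn_eq S.val Subtype.val_injective Xf n,
      growthFn_eq T.val Subtype.val_injective (Xf.image (Subalgebra.inclusion hST)) n]
    have himg : (T.val : ↥T → U) '' ((Xf.image (Subalgebra.inclusion hST) : Finset ↥T) : Set ↥T)
        = (S.val : ↥S → U) '' (Xf : Set ↥S) := by
      rw [Finset.coe_image, ← Set.image_comp]
      rfl
    rw [himg]
  · -- T ⪯ S : hard direction
    intro Yf
    -- decompose each element of Yf as a combination of words over a finite alphabet
    have hdec : ∀ v : U, ∃ (A : Finset U) (d : ℕ), v ∈ T →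
        ((A : Set U) ⊆ (S : Set U) ∪ X ∧ v ∈ Submodule.span k (wordsSet (A : Set U) d)) := by
      intro v
      by_cases hv : v ∈ T
      · have hv' : v ∈ Algebra.adjoin k ((S : Set U) ∪ X) := hT ▸ hv
        obtain ⟨A, d, h1, h2⟩ := exists_finite_word_decomp (Q := (S : Set U) ∪ X)
          (fun r => Or.inl (S.algebraMap_mem r)) hv'
        exact ⟨A, d, fun _ => ⟨h1, h2⟩⟩
      · exact ⟨∅, 0, fun h => absurd h hv⟩
    choose fA fd hfAd using hdec
    set F : Finset U := Yf.image (fun y : ↥T => (y : U)) with hF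
    set A : Finset U := F.biUnion fA with hA
    set d : ℕ := F.sup fd with hd
    have hFT : ∀ v ∈ F, v ∈ T := by
      intro v hv
      obtain ⟨y, _, rfl⟩ := Finset.mem_image.1 hv
      exact y.2
    have hAsub : (A : Set U) ⊆ (S : Set U) ∪ X := by
      intro a ha
      obtain ⟨v, hv, hav⟩ := Finset.mem_biUnion.1 (Finset.mem_coe.1 ha)
      exact (hfAd v (hFT v hv)).1 (Finset.mem_coe.2 hav)
    have hYspan : ∀ v ∈ (F : Set U), v ∈ Submodule.span k (wordsSet (A : Set U) d) := by
      intro v hv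
      have hvF := Finset.mem_coe.1 hv
      refine Submodule.span_mono ?_ (hfAd v (hFT v hvF)).2
      intro z hz
      exact wordsSet_mono (Finset.le_sup (f := fd) hvF)
        (wordsSet_mono_left (Finset.coe_subset.2 (Finset.subset_biUnion_of_mem fA hvF)) hz)
    -- split the alphabet
    set S₀ : Finset U := A.filter (fun a => a ∈ (S : Set U)) with hS₀
    set X₀ : Finset U := A.filter (fun a => a ∉ (S : Set U)) with hX₀
    have hsplit : (A : Set U) ⊆ (S₀ : Set U) ∪ (X₀ : Set U) := by
      intro a ha
      by_cases h : a ∈ (S : Set U)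
      · exact Or.inl (Finset.mem_coe.2 (Finset.mem_filter.2 ⟨Finset.mem_coe.1 ha, h⟩))
      · exact Or.inr (Finset.mem_coe.2 (Finset.mem_filter.2 ⟨Finset.mem_coe.1 ha, h⟩))
    have hS₀S : (S₀ : Set U) ⊆ (S : Set U) := by
      intro a ha
      exact (Finset.mem_filter.1 (Finset.mem_coe.1 ha)).2
    have hX₀X : (X₀ : Set U) ⊆ X := by
      intro a ha
      have h1 := Finset.mem_filter.1 (Finset.mem_coe.1 ha)
      rcases hAsub (Finset.mem_coe.2 h1.1) with h | h
      · exact absurd h h1.2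
      · exact h
    -- centralizer expansions of the elements of X₀
    choose fC fS hfC hfS hfspan using fun u : U => exists_finite_cs_decomp hcent u
    set C₀ : Finset U := X₀.biUnion fC with hC₀
    set S₁ : Finset U := X₀.biUnion fS with hS₁
    set S₂ : Finset U := S₀ ∪ S₁ with hS₂
    have hC₀c : (C₀ : Set U) ⊆ Set.centralizer (S : Set U) := by
      intro a ha
      obtain ⟨x, hx, hax⟩ := Finset.mem_biUnion.1 (Finset.mem_coe.1 ha)
      exact hfC x (Finset.mem_coe.2 hax)
    have hS₂S : (S₂ : Set U) ⊆ (S : Set U) := by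
      intro a ha
      rcases Finset.mem_union.1 (Finset.mem_coe.1 ha) with h | h
      · exact hS₀S (Finset.mem_coe.2 h)
      · obtain ⟨x, hx, hax⟩ := Finset.mem_biUnion.1 h
        exact hfS x (Finset.mem_coe.2 hax)
    have hS₀₂ : (S₀ : Set U) ⊆ (S₂ : Set U) :=
      Finset.coe_subset.2 Finset.subset_union_left
    have hxexp : ∀ x ∈ (X₀ : Set U),
        x ∈ Submodule.span k (wordsSet (C₀ : Set U) 1 * wordsSet (S₂ : Set U) 1) := by
      intro x hx
      refine Submodule.span_mono ?_ (hfspan x)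
      refine Set.mul_subset_mul ?_ ?_
      · intro c hc
        refine mem_wordsSet_self ?_ le_rfl
        exact Finset.mem_coe.2 (Finset.mem_biUnion.2 ⟨x, Finset.mem_coe.1 hx, Finset.mem_coe.1 hc⟩)
      · intro s hs
        refine mem_wordsSet_self ?_ le_rfl
        exact Finset.mem_coe.2 (Finset.mem_union.2 (Or.inr
          (Finset.mem_biUnion.2 ⟨x, Finset.mem_coe.1 hx, Finset.mem_coe.1 hs⟩)))
    -- the finite generating set of S
    set M : ℕ := m * (d + 1) with hM
    have hWfin : (wordsSet (S₂ : Set U) M).Finite := wordsSet_finite S₂.finite_toSet M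
    set WF : Finset U := hWfin.toFinset with hWF
    have hWFeq : (WF : Set U) = wordsSet (S₂ : Set U) M := hWfin.coe_toFinset
    have hWFS : (WF : Set U) ⊆ (S : Set U) := by
      rw [hWFeq]
      exact wordsSet_subset_subalgebra hS₂S M
    set Y' : Finset ↥S := WF.attach.image
      (fun a => (⟨a.1, hWFS (Finset.mem_coe.2 a.2)⟩ : ↥S)) with hY'
    have hY'img : (S.val : ↥S → U) '' (Y' : Set ↥S) = (WF : Set U) := by
      ext u
      constructor
      · rintro ⟨b, hb, rfl⟩
        obtain ⟨a, _, rfl⟩ := Finset.mem_image.1 (Finset.mem_coe.1 hb)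
        exact Finset.mem_coe.2 a.2
      · intro hu
        refine ⟨⟨u, hWFS hu⟩, ?_, rfl⟩
        exact Finset.mem_coe.2 (Finset.mem_image.2
          ⟨⟨u, Finset.mem_coe.1 hu⟩, Finset.mem_attach _ _, rfl⟩)
    have hGfin : (wordsSet (C₀ : Set U) (m - 1)).Finite := wordsSet_finite C₀.finite_toSet (m - 1)
    set G : Finset U := hGfin.toFinset with hG
    have hGeq : (G : Set U) = wordsSet (C₀ : Set U) (m - 1) := hGfin.coe_toFinset
    refine ⟨Y', G.card + 1, Nat.succ_pos _, fun n => ?_⟩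
    rw [growthFn_eq T.val Subtype.val_injective Yf n,
      growthFn_eq S.val Subtype.val_injective Y' n, hY'img]
    have hTimg : (T.val : ↥T → U) '' (Yf : Set ↥T) = (F : Set U) := by
      rw [hF, Finset.coe_image]
      rfl
    rw [hTimg]
    rcases Nat.eq_zero_or_pos n with rfl | hn
    · -- n = 0
      rw [wordsSet_zero, wordsSet_zero]
      set v := Module.finrank k (Submodule.span k ({1} : Set U))
      have h1 : 1 * v ≤ (G.card + 1) * v := Nat.mul_le_mul_right v (by omega)
      simpa using h1
    · -- n ≥ 1
      set R : ℕ := m * (d * n + 1) with hR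
      have step1 : Submodule.span k (wordsSet (F : Set U) n) ≤
          Submodule.span k (wordsSet (A : Set U) (d * n)) := by
        rw [Submodule.span_le]
        rintro w ⟨l, hlen, hent, rfl⟩
        have h1 := prod_mem_span_wordsSet hYspan l hent
        exact Submodule.span_mono (wordsSet_mono (Nat.mul_le_mul_left d hlen)) h1
      have step2 : Submodule.span k (wordsSet (A : Set U) (d * n)) ≤
          Submodule.span k (wordsSet (C₀ : Set U) (m - 1) * wordsSet (S₂ : Set U) R) := by
        rw [Submodule.span_le]
        exact Set.Subset.trans (wordsSet_mono_left hsplit)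
          (per_word hm hnil hS₀S hX₀X hC₀c hS₂S hS₀₂ hxexp (d * n))
      have hbigfin : FiniteDimensional k (Submodule.span k
          (wordsSet (C₀ : Set U) (m - 1) * wordsSet (S₂ : Set U) R)) :=
        FiniteDimensional.span_of_finite k (hGfin.mul (wordsSet_finite S₂.finite_toSet R))
      have e1 : Module.finrank k (Submodule.span k (wordsSet (F : Set U) n)) ≤
          Module.finrank k (Submodule.span k
            (wordsSet (C₀ : Set U) (m - 1) * wordsSet (S₂ : Set U) R)) :=
        Submodule.finrank_mono (step1.trans step2)
      have e2 : Module.finrank k (Submodule.span k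
          (wordsSet (C₀ : Set U) (m - 1) * wordsSet (S₂ : Set U) R)) ≤
          G.card * Module.finrank k (Submodule.span k (wordsSet (S₂ : Set U) R)) := by
        have h1 := finrank_span_setmul_le (k := k) G (wordsSet (S₂ : Set U) R)
          (wordsSet_finite S₂.finite_toSet R)
        rwa [hGeq] at h1
      have step3 : Submodule.span k (wordsSet (S₂ : Set U) R) ≤
          Submodule.span k (wordsSet (WF : Set U) n) := by
        rw [Submodule.span_le]
        rintro w ⟨l, hlen, hent, rfl⟩
        have hle : l.length ≤ M * n := by
          have h2 : m ≤ m * n := Nat.le_mul_of_pos_right m hn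
          have h3 : R = m * d * n + m := by rw [hR]; ring
          have h4 : M * n = m * d * n + m * n := by rw [hM]; ring
          omega
        have h5 := wordsSet_chop M n l hle hent
        rw [hWFeq]
        exact Submodule.subset_span h5
      have hWFfin : FiniteDimensional k (Submodule.span k (wordsSet (WF : Set U) n)) :=
        FiniteDimensional.span_of_finite k (wordsSet_finite WF.finite_toSet n)
      have e3 : Module.finrank k (Submodule.span k (wordsSet (S₂ : Set U) R)) ≤
          Module.finrank k (Submodule.span k (wordsSet (WF : Set U) n)) :=
        Submodule.finrank_mono step3
      calc Module.finrank k (Submodule.span k (wordsSet (F : Set U) n))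
          ≤ G.card * Module.finrank k (Submodule.span k (wordsSet (S₂ : Set U) R)) :=
            e1.trans e2
        _ ≤ G.card * Module.finrank k (Submodule.span k (wordsSet (WF : Set U) n)) :=
            Nat.mul_le_mul_left _ e3
        _ ≤ (G.card + 1) * Module.finrank k (Submodule.span k (wordsSet (WF : Set U) n)) :=
            Nat.mul_le_mul_right _ (by omega)
end
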